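/- Let ρₗ, ρᵣ > 0, Bx, vxₗ, vxᵣ ∈ ℝ and Btₗ, Btᵣ, vtₗ, vtᵣ ∈ ℝ² satisfy the Rankine–Hugoniot relations ρₗ·vxₗ = ρᵣ·vxᵣ =: G ≠ 0, G·vtₗ − Bx·Btₗ = G·vtᵣ − Bx·Btᵣ, and vxₗ·Btₗ − Bx·vtₗ = vxᵣ·Btᵣ − Bx·vtᵣ. If in addition Bx² ≠ ρₗ·vxₗ² (i.e. the normal flow speed on the left is not equal to the left Alfvén speed), then the transverse field vectors are proportional: Btₗ = [(Bx² − ρᵣ·vxᵣ²)/(Bx² − ρₗ·vxₗ²)]·Btᵣ. In particular Btₗ and Btᵣ are linearly dependent vectors in ℝ², so the transverse magnetic field on one side of the discontinuity is parallel or anti-parallel to that on the other side. -/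
import Mathlib


/-- Coplanarity of MHD discontinuities: under the Rankine–Hugoniot relations (continuity
of the mass flux `G = ρ vx ≠ 0`, of the transverse momentum flux `G·vt - Bx·Bt`, and of
the transverse electric field `vx·Bt - Bx·vt`), if `Bx² ≠ ρₗ vxₗ²` then
`Btₗ = [(Bx² - ρᵣ vxᵣ²)/(Bx² - ρₗ vxₗ²)]·Btᵣ`; in particular `Btₗ` and `Btᵣ` are linearly
dependent, i.e. the transverse magnetic fields on the two sides are parallel or
anti-parallel. -/
theorem mhd_transverse_fields_parallel
    (ρl ρr vxl vxr Bx G : ℝ) (hρl : 0 < ρl) (hρr : 0 < ρr)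
    (Btl Btr vtl vtr : Fin 2 → ℝ)
    (hGl : G = ρl * vxl) (hGr : G = ρr * vxr) (hG : G ≠ 0)
    (hmom : G • vtl - Bx • Btl = G • vtr - Bx • Btr)
    (hind : vxl • Btl - Bx • vtl = vxr • Btr - Bx • vtr)
    (hna : Bx ^ 2 ≠ ρl * vxl ^ 2) :
    Btl = ((Bx ^ 2 - ρr * vxr ^ 2) / (Bx ^ 2 - ρl * vxl ^ 2)) • Btr ∧
    ¬ LinearIndependent ℝ ![Btl, Btr] := by
  have hd : Bx ^ 2 - ρl * vxl ^ 2 ≠ 0 := sub_ne_zero.mpr hna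
  subst hGl
  have key : Btl = ((Bx ^ 2 - ρr * vxr ^ 2) / (Bx ^ 2 - ρl * vxl ^ 2)) • Btr := by
    funext i
    have h1 := congrFun hmom i
    have h2 := congrFun hind i
    simp only [Pi.sub_apply, Pi.smul_apply, smul_eq_mul] at h1 h2 ⊢
    rw [div_mul_eq_mul_div, eq_div_iff hd]
    linear_combination (-Bx) * h1 + (-(ρl*vxl)) * h2 - (vxr * Btr i) * hGr
  refine ⟨key, ?_⟩
  rw [LinearIndependent.pair_iff]
  push_neg
  refine ⟨1, -((Bx ^ 2 - ρr * vxr ^ 2) / (Bx ^ 2 - ρl * vxl ^ 2)), ?_, by norm_num⟩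
  rw [key]; funext i; simp
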